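/- arXiv:2206.04262 — 6 statements merged into one kernel-verified Lean document; each statement's English description precedes it below -/
import Mathlib

section
/- Let m ≥ 1, κ > 0, λ ≥ 0 and μ_1, …, μ_m with λ < μ_i for each i. Let W_1, …, W_m be independent real random variables, with W_i exponentially distributed with rate μ_i − λ, and let p(w) = 1 − e^{−κw}. Then the repeater-less tandem capacity equals the repeater-assisted tandem capacity: λ · (1 − E[p(W_1 + W_2 + ⋯ + W_m)]) = λ · E[∏_{i=1}^m (1 − p(W_i))], and both equal λ · ∏_{i=1}^m (μ_i − λ)/(κ + μ_i − λ). -/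
open MeasureTheory ProbabilityTheory Real

lemma exp_int' {r k : ℝ} (hr : 0 < r) (hk : 0 < k) :
    ∫ x, rexp (-k * x) ∂(expMeasure r) = r / (r + k) := by
  have hrk : 0 < r + k := by linarith
  have hmeas : Measurable fun x : ℝ => rexp (-k * x) :=
    (measurable_id.const_mul (-k)).exp
  rw [integral_eq_lintegral_of_nonneg_ae (ae_of_all _ fun x => (exp_pos _).le)
    hmeas.aestronglyMeasurable]
  have key : ∫⁻ x, ENNReal.ofReal (rexp (-k * x)) ∂(expMeasure r)
      = ∫⁻ x, ENNReal.ofReal (r / (r + k)) * exponentialPDF (r + k) x := by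
    rw [expMeasure, gammaMeasure,
      lintegral_withDensity_eq_lintegral_mul _
        (by exact (measurable_gammaPDFReal 1 r).ennreal_ofReal : Measurable (gammaPDF 1 r))
        (hmeas.ennreal_ofReal)]
    refine lintegral_congr fun x => ?_
    show gammaPDF 1 r x * ENNReal.ofReal (rexp (-k * x))
      = ENNReal.ofReal (r / (r + k)) * exponentialPDF (r + k) x
    have hg : gammaPDF 1 r x = exponentialPDF r x := rfl
    rw [hg]
    rcases le_or_gt 0 x with hx | hx
    · rw [exponentialPDF_of_nonneg hx, exponentialPDF_of_nonneg hx,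
        ← ENNReal.ofReal_mul (by positivity), ← ENNReal.ofReal_mul (by positivity)]
      congr 1
      rw [show -((r + k) * x) = -(r * x) + -k * x by ring, Real.exp_add]
      field_simp
    · rw [exponentialPDF_of_neg hx, exponentialPDF_of_neg hx, zero_mul, mul_zero]
  rw [key, lintegral_const_mul _
      (by exact (measurable_exponentialPDFReal (r + k)).ennreal_ofReal :
        Measurable (exponentialPDF (r + k))),
    lintegral_exponentialPDF_eq_one hrk, mul_one, ENNReal.toReal_ofReal (by positivity)]

lemma expMeasure_Iio_zero {r : ℝ} : expMeasure r (Set.Iio 0) = 0 := by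
  rw [expMeasure, gammaMeasure, withDensity_apply _ measurableSet_Iio]
  exact lintegral_exponentialPDF_of_nonpos le_rfl

lemma iIndepFun_of_ae_eq' {Ω ι : Type*} [MeasurableSpace Ω] {P : Measure Ω}
    {f g : ι → Ω → ℝ} (h : iIndepFun f P)
    (hfg : ∀ i, f i =ᵐ[P] g i) :
    iIndepFun g P := by
  rw [iIndepFun_iff_measure_inter_preimage_eq_mul] at h ⊢
  intro S sets hsets
  have hae : ∀ᵐ ω ∂P, ∀ i ∈ S, f i ω = g i ω :=
    (ae_ball_iff S.countable_toSet).2 fun i _ => hfg i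
  have h1 : P (⋂ i ∈ S, g i ⁻¹' sets i) = P (⋂ i ∈ S, f i ⁻¹' sets i) := by
    refine measure_congr (hae.mono fun ω hω => ?_)
    show (ω ∈ ⋂ i ∈ S, g i ⁻¹' sets i) = (ω ∈ ⋂ i ∈ S, f i ⁻¹' sets i)
    refine eq_iff_iff.2 ?_
    simp only [Set.mem_iInter, Set.mem_preimage]
    exact forall₂_congr fun i hi => by rw [hω i hi]
  rw [h1, h S hsets]
  refine Finset.prod_congr rfl fun i hi => ?_
  refine measure_congr ((hfg i).mono fun ω hω => ?_)
  show (f i ω ∈ sets i) = (g i ω ∈ sets i)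
  rw [hω]

/-- With `p(w) = 1 - e^{-κw}` and independent `W i` exponential with rate
`μ i - λ`, the repeater-less tandem capacity equals the repeater-assisted tandem capacity:
`λ(1 - E[p(W₁ + ⋯ + W_m)]) = λ E[∏ i (1 - p(W i))]`, and both equal
`λ ∏ i (μ i - λ)/(κ + μ i - λ)`. -/
theorem stmt2 {Ω : Type*} [MeasurableSpace Ω] (P : Measure Ω) [IsProbabilityMeasure P]
    (m : ℕ) (hm : 1 ≤ m) (kappa lam : ℝ) (hkappa : 0 < kappa) (hlam : 0 ≤ lam)
    (mu : Fin m → ℝ) (hmu : ∀ i, lam < mu i)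
    (W : Fin m → Ω → ℝ)
    (hind : iIndepFun W P)
    (hdist : ∀ i, P.map (W i) = expMeasure (mu i - lam))
    (p : ℝ → ℝ) (hp : ∀ w, p w = 1 - Real.exp (-kappa * w)) :
    lam * (1 - ∫ ω, p (∑ i, W i ω) ∂P) = lam * (∫ ω, ∏ i, (1 - p (W i ω)) ∂P) ∧
    lam * (1 - ∫ ω, p (∑ i, W i ω) ∂P) = lam * ∏ i, (mu i - lam) / (kappa + mu i - lam) ∧
    lam * (∫ ω, ∏ i, (1 - p (W i ω)) ∂P) = lam * ∏ i, (mu i - lam) / (kappa + mu i - lam) := by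
  classical
  have hrpos : ∀ i, 0 < mu i - lam := fun i => sub_pos.2 (hmu i)
  -- a.e. measurability
  have haem : ∀ i, AEMeasurable (W i) P := by
    intro i
    by_contra h
    have h0 := hdist i
    rw [Measure.map_of_not_aemeasurable h] at h0
    have hprob := isProbabilityMeasure_expMeasure (hrpos i)
    have := hprob.measure_univ
    rw [← h0] at this
    simp at this
  set W' : Fin m → Ω → ℝ := fun i => (haem i).mk (W i) with hW'def
  have hW'meas : ∀ i, Measurable (W' i) := fun i => (haem i).measurable_mk
  have hW'ae : ∀ i, W i =ᵐ[P] W' i := fun i => (haem i).ae_eq_mk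
  have hind' : iIndepFun W' P := iIndepFun_of_ae_eq' hind hW'ae
  have hdist' : ∀ i, P.map (W' i) = expMeasure (mu i - lam) := fun i => by
    rw [← Measure.map_congr (hW'ae i), hdist i]
  -- a.e. nonnegativity
  have hnn : ∀ i, ∀ᵐ ω ∂P, 0 ≤ W i ω := by
    intro i
    have h0 : P (W' i ⁻¹' Set.Iio 0) = 0 := by
      rw [← Measure.map_apply (hW'meas i) measurableSet_Iio, hdist' i, expMeasure_Iio_zero]
    have h1 : ∀ᵐ ω ∂P, 0 ≤ W' i ω := by
      rw [ae_iff]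
      convert h0 using 2
      ext ω
      simp [Set.mem_preimage, not_le]
    filter_upwards [h1, hW'ae i] with ω h1ω h2ω
    rw [h2ω]; exact h1ω
  -- pointwise identity
  have hpoint : ∀ ω, ∏ i, (1 - p (W i ω)) = rexp (-kappa * ∑ i, W i ω) := by
    intro ω
    simp only [hp, sub_sub_cancel]
    rw [Finset.mul_sum, Real.exp_sum]
  -- the key integral value
  have hPi : (∏ i, (mu i - lam) / (mu i - lam + kappa))
      = ∏ i, (mu i - lam) / (kappa + mu i - lam) := by
    refine Finset.prod_congr rfl fun i _ => ?_
    congr 1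
    ring
  -- F and its integral
  have hF'meas : ∀ i, AEStronglyMeasurable (W i) P := fun i => (haem i).aestronglyMeasurable
  have hsum_aem : AEMeasurable (fun ω => ∑ i, W i ω) P :=
    Finset.aemeasurable_fun_sum _ fun i _ => haem i
  have hFaesm : AEStronglyMeasurable (fun ω => rexp (-kappa * ∑ i, W i ω)) P :=
    (measurable_exp.comp_aemeasurable (hsum_aem.const_mul (-kappa))).aestronglyMeasurable
  have hFbd : ∀ᵐ ω ∂P, ‖rexp (-kappa * ∑ i, W i ω)‖ ≤ 1 := by
    have hallnn : ∀ᵐ ω ∂P, ∀ i, 0 ≤ W i ω := ae_all_iff.2 hnn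
    filter_upwards [hallnn] with ω hω
    rw [Real.norm_eq_abs, abs_of_pos (exp_pos _)]
    apply Real.exp_le_one_iff.2
    have : 0 ≤ ∑ i, W i ω := Finset.sum_nonneg fun i _ => hω i
    nlinarith [hkappa.le]
  have hFint : Integrable (fun ω => rexp (-kappa * ∑ i, W i ω)) P :=
    Integrable.mono' (integrable_const 1) hFaesm hFbd
  have hA : ∫ ω, rexp (-kappa * ∑ i, W i ω) ∂P = ∏ i, (mu i - lam) / (kappa + mu i - lam) := by
    have hcong : ∫ ω, rexp (-kappa * ∑ i, W i ω) ∂P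
        = ∫ ω, rexp (-kappa * ∑ i, W' i ω) ∂P := by
      refine integral_congr_ae ?_
      filter_upwards [ae_all_iff.2 hW'ae] with ω hω
      rw [Finset.sum_congr rfl fun i _ => hω i]
    have hmgf := hind'.mgf_sum hW'meas (t := -kappa) Finset.univ
    have h1 : ∫ ω, rexp (-kappa * ∑ i, W' i ω) ∂P = mgf (∑ i, W' i) P (-kappa) := by
      simp only [mgf, Finset.sum_apply]
    rw [hcong, h1, hmgf, ← hPi]
    refine Finset.prod_congr rfl fun i _ => ?_
    have h2 : mgf (W' i) P (-kappa) = ∫ x, rexp (-kappa * x) ∂(P.map (W' i)) := by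
      rw [mgf]
      exact (integral_map (f := fun x => rexp (-kappa * x)) (hW'meas i).aemeasurable
        (((measurable_id.const_mul (-kappa)).exp).aestronglyMeasurable)).symm
    rw [h2, hdist' i, exp_int' (hrpos i) hkappa]
  have hprod_int : ∫ ω, ∏ i, (1 - p (W i ω)) ∂P
      = ∏ i, (mu i - lam) / (kappa + mu i - lam) := by
    rw [← hA]
    exact integral_congr_ae (ae_of_all _ fun ω => hpoint ω)
  have hp_int : ∫ ω, p (∑ i, W i ω) ∂P
      = 1 - ∏ i, (mu i - lam) / (kappa + mu i - lam) := by
    have : (fun ω => p (∑ i, W i ω)) = fun ω => 1 - rexp (-kappa * ∑ i, W i ω) := by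
      funext ω; rw [hp]
    rw [this, integral_sub (integrable_const 1) hFint, integral_const, probReal_univ, hA]
    simp
  refine ⟨?_, ?_, ?_⟩
  · rw [hp_int, hprod_int]; ring
  · rw [hp_int]; ring
  · rw [hprod_int]
end

section
/- Let κ > 0 and μ > 0, and define F : [0, μ] → ℝ by F(x) = x(μ − x)/(κ + μ − x). Then F is strictly concave on [0, μ]. -/
private lemma strictConcaveOn_congr {s : Set ℝ} {f g : ℝ → ℝ}
    (h : StrictConcaveOn ℝ s g) (hfg : ∀ x ∈ s, f x = g x) : StrictConcaveOn ℝ s f := by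
  refine ⟨h.1, fun x hx y hy hxy a b ha hb hab => ?_⟩
  rw [hfg x hx, hfg y hy, hfg _ (h.1 hx hy ha.le hb.le hab)]
  exact h.2 hx hy hxy ha hb hab

/-- The single queue-channel capacity `F(x) = x(μ - x)/(κ + μ - x)` is strictly
concave on `[0, μ]`. -/
theorem stmt5 (kappa mu : ℝ) (hkappa : 0 < kappa) (hmu : 0 < mu) :
    StrictConcaveOn ℝ (Set.Icc (0 : ℝ) mu)
      (fun x => x * (mu - x) / (kappa + mu - x)) := by
  have hne : ∀ y : ℝ, y < kappa + mu → kappa + mu - y ≠ 0 :=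
    fun y hy => sub_ne_zero.mpr hy.ne'
  set h : ℝ → ℝ := fun y => y + kappa - (kappa + mu) * kappa * (kappa + mu - y)⁻¹ with hh
  set D : ℝ → ℝ := fun y => 1 - (kappa + mu) * kappa * ((kappa + mu - y) ^ 2)⁻¹ with hD
  have hD1 : ∀ y : ℝ, y < kappa + mu → HasDerivAt h (D y) y := by
    intro y hy
    have h1 : HasDerivAt (fun z : ℝ => kappa + mu - z) (-1) y := by
      simpa using (hasDerivAt_id' y).const_sub (kappa + mu)
    have h2 := h1.inv (hne y hy)
    have h3 := h2.const_mul ((kappa + mu) * kappa)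
    have h4 := ((hasDerivAt_id y).add_const kappa).sub h3
    simp only [hh, hD]
    convert h4 using 1
    · rfl
    · rfl
    · rfl
    · field_simp
  have hD2 : ∀ y : ℝ, y < kappa + mu →
      HasDerivAt D (-((kappa + mu) * kappa * (2 * (kappa + mu - y) / ((kappa + mu - y) ^ 2) ^ 2))) y := by
    intro y hy
    have h1 : HasDerivAt (fun z : ℝ => kappa + mu - z) (-1) y := by
      simpa using (hasDerivAt_id' y).const_sub (kappa + mu)
    have h2 : HasDerivAt (fun z : ℝ => (kappa + mu - z) ^ 2)
        ((2 : ℕ) * (kappa + mu - y) ^ 1 * (-1)) y := h1.pow 2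
    have h3 := h2.inv (pow_ne_zero 2 (hne y hy))
    have h4 := (h3.const_mul ((kappa + mu) * kappa)).const_sub 1
    simp only [hD]
    convert h4 using 1
    · rfl
    · rfl
    · rfl
    · push_cast
      ring
  have hconc : StrictConcaveOn ℝ (Set.Icc (0 : ℝ) mu) h := by
    apply strictConcaveOn_of_deriv2_neg (convex_Icc 0 mu)
    · apply ContinuousOn.sub
      · fun_prop
      · apply ContinuousOn.mul continuousOn_const
        apply ContinuousOn.inv₀ (by fun_prop)
        intro x hx
        exact hne x (by have := hx.2; linarith)
    · intro x hx
      rw [interior_Icc] at hx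
      have hxc : x < kappa + mu := by have := hx.2; linarith
      have hev : deriv h =ᶠ[nhds x] D := by
        filter_upwards [Iio_mem_nhds hxc] with y hy
        exact (hD1 y hy).deriv
      simp only [Function.iterate_succ, Function.iterate_zero, Function.comp_apply, id]
      rw [hev.deriv_eq, (hD2 x hxc).deriv]
      have hpos : 0 < kappa + mu - x := by linarith
      have : (0:ℝ) < (kappa + mu) * kappa * (2 * (kappa + mu - x) / ((kappa + mu - x) ^ 2) ^ 2) := by
        positivity
      linarith
  apply strictConcaveOn_congr hconc
  intro x hx
  have hxc : kappa + mu - x ≠ 0 := hne x (by have := hx.2; linarith)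
  simp only [hh]
  field_simp
  ring
end

section
/- Let κ > 0 and μ > 0, and define h : [0, 2μ) → ℝ by h(λ) = λ(μ − λ/2)/(κ + μ − λ/2). Then λ* = 2(μ + κ − √(μκ + κ²)) satisfies 0 < λ* < 2μ and h(λ) ≤ h(λ*) for all λ ∈ [0, 2μ). -/
open Real

/-- For `h(λ) = λ(μ - λ/2)/(κ + μ - λ/2)` on `[0, 2μ)`, the point
`λ* = 2(μ + κ - √(μκ + κ²))` lies in `(0, 2μ)` and maximizes `h` on `[0, 2μ)`. -/
theorem stmt6 (kappa mu : ℝ) (hkappa : 0 < kappa) (hmu : 0 < mu)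
    (h : ℝ → ℝ) (hh : ∀ lam, h lam = lam * (mu - lam / 2) / (kappa + mu - lam / 2))
    (lamStar : ℝ) (hstar : lamStar = 2 * (mu + kappa - Real.sqrt (mu * kappa + kappa ^ 2))) :
    0 < lamStar ∧ lamStar < 2 * mu ∧
      ∀ lam ∈ Set.Ico (0 : ℝ) (2 * mu), h lam ≤ h lamStar := by
  set s := Real.sqrt (mu * kappa + kappa ^ 2) with hs
  have hsq : s ^ 2 = mu * kappa + kappa ^ 2 := Real.sq_sqrt (by nlinarith)
  have hspos : 0 < s := Real.sqrt_pos.mpr (by nlinarith)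
  have hslt : s < mu + kappa := by
    nlinarith [hsq, hspos]
  have hsgt : kappa < s := by
    nlinarith [hsq, hspos]
  refine ⟨by nlinarith, by nlinarith, ?_⟩
  intro lam hlam
  obtain ⟨hl0, hl2⟩ := hlam
  rw [hh, hh]
  have hd : 0 < kappa + mu - lam / 2 := by nlinarith
  have hdstar : kappa + mu - lamStar / 2 = s := by rw [hstar]; ring
  rw [hdstar]
  rw [div_le_div_iff₀ hd hspos]
  have hmstar : mu - lamStar / 2 = s - kappa := by rw [hstar]; ring
  rw [hmstar, hstar]
  nlinarith [sq_nonneg (kappa + mu - lam / 2 - s), hsq, hspos, hd, sq_nonneg (lam - lamStar)]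
end

section
/- Let κ > 0 and μ > 0. For λ ≥ 0 and δ ∈ [0,1] with λδ < μ and λ(1−δ) < μ, define g(λ, δ) = λδ(μ − λδ)/(κ + μ − λδ) + λ(1−δ)(μ − λ(1−δ))/(κ + μ − λ(1−δ)). Then the pair (λ*, δ*) = (2(μ + κ − √(μκ + κ²)), 1/2) is feasible and maximizes g: for every feasible (λ, δ), g(λ, δ) ≤ g(λ*, 1/2). -/
open Real

/-- For homogeneous parallel queue-channels with capacity
`g(λ, δ) = λδ(μ - λδ)/(κ + μ - λδ) + λ(1-δ)(μ - λ(1-δ))/(κ + μ - λ(1-δ))`,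
the pair `(λ*, δ*) = (2(μ + κ - √(μκ + κ²)), 1/2)` is feasible and maximizes `g` over all
feasible `(λ, δ)` (i.e. `λ ≥ 0`, `δ ∈ [0,1]`, `λδ < μ`, `λ(1-δ) < μ`). -/
theorem stmt7 (kappa mu : ℝ) (hkappa : 0 < kappa) (hmu : 0 < mu)
    (g : ℝ → ℝ → ℝ)
    (hg : ∀ lam delta, g lam delta =
      lam * delta * (mu - lam * delta) / (kappa + mu - lam * delta)
        + lam * (1 - delta) * (mu - lam * (1 - delta)) / (kappa + mu - lam * (1 - delta)))
    (lamStar : ℝ) (hstar : lamStar = 2 * (mu + kappa - Real.sqrt (mu * kappa + kappa ^ 2))) :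
    (0 ≤ lamStar ∧ (1 / 2 : ℝ) ∈ Set.Icc (0 : ℝ) 1 ∧
        lamStar * (1 / 2) < mu ∧ lamStar * (1 - 1 / 2) < mu) ∧
      ∀ lam delta : ℝ, 0 ≤ lam → delta ∈ Set.Icc (0 : ℝ) 1 →
        lam * delta < mu → lam * (1 - delta) < mu →
        g lam delta ≤ g lamStar (1 / 2) := by
  set s := Real.sqrt (mu * kappa + kappa ^ 2) with hsdef
  have hsq : s ^ 2 = mu * kappa + kappa ^ 2 := Real.sq_sqrt (by nlinarith)
  have hs0 : 0 < s := Real.sqrt_pos.mpr (by nlinarith)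
  have hsltc : s < kappa + mu := by nlinarith
  have hkls : kappa < s := by nlinarith
  have hx1 : lamStar * (1 / 2) = kappa + mu - s := by rw [hstar]; ring
  have hx2 : lamStar * (1 - 1 / 2) = kappa + mu - s := by rw [hstar]; ring
  have key : ∀ x : ℝ, x < mu → x * (mu - x) / (kappa + mu - x) ≤ mu + 2 * kappa - 2 * s := by
    intro x hx
    have hy : 0 < kappa + mu - x := by linarith
    rw [div_le_iff₀ hy]
    nlinarith [sq_nonneg (kappa + mu - x - s)]
  have hgstar : g lamStar (1 / 2) = 2 * (mu + 2 * kappa - 2 * s) := by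
    rw [hg, hx1, hx2]
    have h3 : kappa + mu - (kappa + mu - s) = s := by ring
    rw [h3]
    field_simp
    nlinarith
  refine ⟨⟨by rw [hstar]; nlinarith, by norm_num, by rw [hx1]; linarith, by rw [hx2]; linarith⟩,
    fun lam delta _ _ h1 h2 => ?_⟩
  rw [hg, hgstar]
  have k1 := key (lam * delta) h1
  have k2 := key (lam * (1 - delta)) h2
  linarith
end

section
/- Let κ > 0, μ > 0 and fix λ ∈ [0, 2μ). For δ ∈ [0,1] with λδ < μ and λ(1−δ) < μ, define g(δ) = λδ(μ − λδ)/(κ + μ − λδ) + λ(1−δ)(μ − λ(1−δ))/(κ + μ − λ(1−δ)). Then δ = 1/2 is feasible and g(δ) ≤ g(1/2) for all feasible δ: the equal split is the optimal routing probability for homogeneous parallel queue-channels at any fixed transmission rate. -/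
/-- For homogeneous parallel queue-channels at a fixed transmission rate
`λ ∈ [0, 2μ)`, the equal split `δ = 1/2` is feasible and maximizes the capacity
`g(δ) = λδ(μ - λδ)/(κ + μ - λδ) + λ(1-δ)(μ - λ(1-δ))/(κ + μ - λ(1-δ))` over all feasible
`δ ∈ [0,1]` with `λδ < μ` and `λ(1-δ) < μ`. -/
theorem stmt8 (kappa mu lam : ℝ) (hkappa : 0 < kappa) (hmu : 0 < mu)
    (hlam : lam ∈ Set.Ico (0 : ℝ) (2 * mu))
    (g : ℝ → ℝ)
    (hg : ∀ delta, g delta =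
      lam * delta * (mu - lam * delta) / (kappa + mu - lam * delta)
        + lam * (1 - delta) * (mu - lam * (1 - delta)) / (kappa + mu - lam * (1 - delta))) :
    ((1 / 2 : ℝ) ∈ Set.Icc (0 : ℝ) 1 ∧ lam * (1 / 2) < mu ∧ lam * (1 - 1 / 2) < mu) ∧
      ∀ delta ∈ Set.Icc (0 : ℝ) 1, lam * delta < mu → lam * (1 - delta) < mu →
        g delta ≤ g (1 / 2) := by
  obtain ⟨hlam0, hlam2⟩ := hlam
  have hhalf : lam * (1 / 2) < mu := by linarith
  refine ⟨⟨by norm_num, hhalf, by norm_num; linarith⟩, ?_⟩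
  intro delta hdelta h1 h2
  rw [hg, hg]
  have hs1 : 0 < kappa + mu - lam * delta := by linarith
  have hs2 : 0 < kappa + mu - lam * (1 - delta) := by linarith
  have hs0 : 0 < kappa + mu - lam * (1 / 2) := by linarith
  norm_num only
  rw [div_add_div _ _ (ne_of_gt hs1) (ne_of_gt hs2), div_add_div _ _ (ne_of_gt hs0) (ne_of_gt hs0),
    div_le_div_iff₀ (by positivity) (by positivity)]
  nlinarith [sq_nonneg (lam * delta - lam * (1 - delta)), mul_pos hs1 hs2, mul_pos hs0 hs0,
    mul_pos (mul_pos hs1 hs2) hs0, mul_pos hkappa (mul_pos hs0 hs0),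
    mul_nonneg (mul_nonneg hkappa.le (mul_pos hkappa hmu).le) (sq_nonneg (lam*delta - lam*(1-delta))),
    mul_nonneg (mul_pos hkappa hs0).le (sq_nonneg (lam*delta - lam*(1-delta)))]
end

section
/- Let κ > 0, μ_1, μ_2 > 0 and fix λ > 0. On the feasible set D = {δ ∈ [0,1] : λδ < μ_1 and λ(1−δ) < μ_2} (assumed nonempty), the function C_p(δ) = λδ(μ_1 − λδ)/(κ + μ_1 − λδ) + λ(1−δ)(μ_2 − λ(1−δ))/(κ + μ_2 − λ(1−δ)) is strictly concave in δ; consequently C_p has at most one maximizer δ* on D. -/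
lemma inv_strict (p q s t : ℝ) (hp : 0 < p) (hq : 0 < q) (hpq : p ≠ q)
    (hs : 0 < s) (ht : 0 < t) (hst : s + t = 1) :
    (s * p + t * q)⁻¹ < s * p⁻¹ + t * q⁻¹ := by
  have hm : 0 < s * p + t * q := by positivity
  have hne : p - q ≠ 0 := sub_ne_zero.2 hpq
  have hsq : 0 < (p - q) ^ 2 := by positivity
  have h1 : s * p⁻¹ + t * q⁻¹ = (s * q + t * p) / (p * q) := by field_simp
  rw [h1, inv_eq_one_div, div_lt_div_iff₀ hm (by positivity)]
  have expand : (s * q + t * p) * (s * p + t * q) = p * q * (s + t) ^ 2 + s * t * (p - q) ^ 2 := by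
    ring
  rw [hst] at expand
  nlinarith [mul_pos (mul_pos hs ht) hsq]

lemma core (kap mu u v s t : ℝ) (hk : 0 < kap) (hmu : 0 < mu)
    (hu : u < mu) (hv : v < mu) (huv : u ≠ v)
    (hs : 0 < s) (ht : 0 < t) (hst : s + t = 1) :
    s * (u * (mu - u) / (kap + mu - u)) + t * (v * (mu - v) / (kap + mu - v))
      < (s * u + t * v) * (mu - (s * u + t * v)) / (kap + mu - (s * u + t * v)) := by
  have hp : 0 < kap + mu - u := by linarith
  have hq : 0 < kap + mu - v := by linarith
  have hpq : kap + mu - u ≠ kap + mu - v := by intro h; exact huv (by linarith)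
  have hmid : kap + mu - (s * u + t * v) = s * (kap + mu - u) + t * (kap + mu - v) := by
    linear_combination (kap + mu) * hst.symm
  have key := inv_strict (kap + mu - u) (kap + mu - v) s t hp hq hpq hs ht hst
  have hA : 0 < kap * (kap + mu) := by positivity
  have h1 : u * (mu - u) / (kap + mu - u) = u + kap - kap * (kap + mu) * (kap + mu - u)⁻¹ := by
    field_simp; ring
  have h2 : v * (mu - v) / (kap + mu - v) = v + kap - kap * (kap + mu) * (kap + mu - v)⁻¹ := by
    field_simp; ring
  have hm : 0 < kap + mu - (s * u + t * v) := by rw [hmid]; positivity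
  have h3 : (s * u + t * v) * (mu - (s * u + t * v)) / (kap + mu - (s * u + t * v))
      = (s * u + t * v) + kap - kap * (kap + mu) * (kap + mu - (s * u + t * v))⁻¹ := by
    field_simp; ring
  rw [h1, h2, h3, hmid]
  have := mul_lt_mul_of_pos_left key hA
  nlinarith [this]


/-- For heterogeneous parallel queue-channels at a fixed rate `λ > 0`, the
capacity `C_p(δ)` is strictly concave in `δ` on the nonempty feasible set
`D = {δ ∈ [0,1] : λδ < μ₁ ∧ λ(1-δ) < μ₂}`; consequently `C_p` has at most one maximizer
on `D`. -/
theorem stmt9 (kappa mu1 mu2 lam : ℝ) (hkappa : 0 < kappa) (hmu1 : 0 < mu1) (hmu2 : 0 < mu2)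
    (hlam : 0 < lam)
    (D : Set ℝ)
    (hD : D = {delta : ℝ | delta ∈ Set.Icc (0 : ℝ) 1 ∧ lam * delta < mu1 ∧
      lam * (1 - delta) < mu2})
    (hne : D.Nonempty)
    (Cp : ℝ → ℝ)
    (hCp : ∀ delta, Cp delta =
      lam * delta * (mu1 - lam * delta) / (kappa + mu1 - lam * delta)
        + lam * (1 - delta) * (mu2 - lam * (1 - delta)) / (kappa + mu2 - lam * (1 - delta))) :
    StrictConcaveOn ℝ D Cp ∧
      ∀ d1 ∈ D, ∀ d2 ∈ D,
        (∀ d ∈ D, Cp d ≤ Cp d1) → (∀ d ∈ D, Cp d ≤ Cp d2) → d1 = d2 := by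
  have hconv : Convex ℝ D := by
    rw [hD]
    intro x hx y hy s t hs ht hst
    simp only [Set.mem_setOf_eq, Set.mem_Icc] at hx hy ⊢
    obtain ⟨⟨hx0, hx1⟩, hx2, hx3⟩ := hx
    obtain ⟨⟨hy0, hy1⟩, hy2, hy3⟩ := hy
    simp only [smul_eq_mul]
    have key : ∀ a b m : ℝ, a < m → b < m → s * a + t * b < m := by
      intro a b m ha hb
      rcases hs.eq_or_lt with h | h
      · have ht1 : t = 1 := by linarith
        rw [← h, ht1]; simpa using hb
      · have hm : s * m + t * m = m := by linear_combination m * hst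
        linarith [mul_lt_mul_of_pos_left ha h, mul_le_mul_of_nonneg_left hb.le ht]
    have e1 : lam * (s * x + t * y) = s * (lam * x) + t * (lam * y) := by ring
    have e2 : lam * (1 - (s * x + t * y)) = s * (lam * (1 - x)) + t * (lam * (1 - y)) := by
      linear_combination lam * hst.symm
    exact ⟨⟨by positivity, by nlinarith⟩, by rw [e1]; exact key _ _ _ hx2 hy2,
      by rw [e2]; exact key _ _ _ hx3 hy3⟩
  have hsc : StrictConcaveOn ℝ D Cp := by
    refine ⟨hconv, ?_⟩
    intro x hx y hy hxy s t hs ht hst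
    rw [hD] at hx hy
    simp only [Set.mem_setOf_eq, Set.mem_Icc] at hx hy
    obtain ⟨⟨hx0, hx1⟩, hx2, hx3⟩ := hx
    obtain ⟨⟨hy0, hy1⟩, hy2, hy3⟩ := hy
    have h1 := core kappa mu1 (lam * x) (lam * y) s t hkappa hmu1 hx2 hy2
      (fun h => hxy (mul_left_cancel₀ hlam.ne' h)) hs ht hst
    have h2 := core kappa mu2 (lam * (1 - x)) (lam * (1 - y)) s t hkappa hmu2 hx3 hy3
      (fun h => hxy (by have := mul_left_cancel₀ hlam.ne' h; linarith)) hs ht hst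
    have e1 : s * (lam * x) + t * (lam * y) = lam * (s * x + t * y) := by ring
    have e2 : s * (lam * (1 - x)) + t * (lam * (1 - y)) = lam * (1 - (s * x + t * y)) := by
      linear_combination lam * hst
    rw [e1] at h1
    rw [e2] at h2
    simp only [smul_eq_mul, hCp]
    nlinarith [h1, h2]
  refine ⟨hsc, fun d1 hd1 d2 hd2 hmax1 hmax2 => ?_⟩
  exact hsc.eq_of_isMaxOn (fun d hd => hmax1 d hd) (fun d hd => hmax2 d hd) hd1 hd2
end
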